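/- arXiv:1210.8220 — 3 statements merged into one kernel-verified Lean document; each statement's English description precedes it below -/
import Mathlib

section
/- Let f₁ > 0, μ > 0 with μ ≠ f₁, and let θ̇ ∈ L²([0,∞); ℝᵐ) with L² norm D. Define ζ₂(t) = |e_χ(0)| m ∫₀^t ‖θ̇(τ)‖ e^{−μ(t−τ)} e^{−f₁ τ} dτ for a constant m ≥ 1. Then ∫₀^∞ ζ₂(t)² dt ≤ (m² e_χ(0)²/(4 μ f₁)) D². -/
open MeasureTheory Set

lemma exp_mul_intervalIntegral (a t : ℝ) (ha : a ≠ 0) :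
    ∫ x in (0:ℝ)..t, Real.exp (a * x) = (Real.exp (a * t) - 1) / a := by
  have h : ∀ x ∈ Set.uIcc (0:ℝ) t,
      HasDerivAt (fun x => Real.exp (a * x) / a) (Real.exp (a * x)) x := by
    intro x _
    have h1 : HasDerivAt (fun x : ℝ => Real.exp (a * x)) (Real.exp (a * x) * a) x :=
      by simpa using ((hasDerivAt_id x).const_mul a).exp
    simpa [mul_div_assoc, mul_div_cancel_right₀ _ ha] using h1.div_const a
  rw [intervalIntegral.integral_eq_sub_of_hasDerivAt h
    (((Real.continuous_exp.comp (continuous_const.mul continuous_id))).intervalIntegrable 0 t)]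
  simp [sub_div]

lemma exp_neg_integral_Ioi' (b : ℝ) (hb : 0 < b) :
    ∫ x in Set.Ioi (0:ℝ), Real.exp (-b * x) = 1 / b := by
  have hcont : ContinuousWithinAt (fun x : ℝ => -Real.exp (-b * x) / b) (Set.Ici 0) 0 :=
    (Continuous.continuousWithinAt (by continuity))
  have hderiv : ∀ x ∈ Set.Ioi (0:ℝ),
      HasDerivAt (fun x : ℝ => -Real.exp (-b * x) / b) (Real.exp (-b * x)) x := by
    intro x _
    have h1 : HasDerivAt (fun x : ℝ => Real.exp (-b * x)) (Real.exp (-b * x) * (-b)) x :=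
      by simpa using ((hasDerivAt_id x).const_mul (-b)).exp
    have h2 := (h1.neg).div_const b
    have heq : -(Real.exp (-b * x) * -b) / b = Real.exp (-b * x) := by
      field_simp
    rwa [heq] at h2
  have htend : Filter.Tendsto (fun x : ℝ => -Real.exp (-b * x) / b) Filter.atTop (nhds 0) := by
    have : Filter.Tendsto (fun x : ℝ => Real.exp (-b * x)) Filter.atTop (nhds 0) :=
      Real.tendsto_exp_atBot.comp (Filter.tendsto_id.const_mul_atTop_of_neg (by linarith))
    simpa using (this.neg).div_const b
  have := MeasureTheory.integral_Ioi_of_hasDerivAt_of_tendsto hcont hderiv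
    (exp_neg_integrableOn_Ioi 0 hb) htend
  simpa [neg_div] using this

theorem zeta2_l2_bound {m' : ℕ} (f₁ μ : ℝ) (hf₁ : 0 < f₁) (hμ : 0 < μ) (hne : μ ≠ f₁)
    (m echi0 D : ℝ) (hm : 1 ≤ m)
    (θd : ℝ → EuclideanSpace ℝ (Fin m')) (hθd : Measurable θd)
    (hD : (∫ τ in Set.Ioi (0:ℝ), ‖θd τ‖^2) = D^2)
    (hDint : Integrable (fun τ => ‖θd τ‖^2) (volume.restrict (Set.Ioi 0)))
    (ζ₂ : ℝ → ℝ)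
    (hζ₂ : ∀ t, ζ₂ t = |echi0| * m * ∫ τ in (0:ℝ)..t,
        ‖θd τ‖ * Real.exp (-μ * (t - τ)) * Real.exp (-f₁ * τ)) :
    (∫ t in Set.Ioi (0:ℝ), (ζ₂ t)^2) ≤ m^2 * echi0^2 / (4 * μ * f₁) * D^2 := by
  have hDnn : 0 ≤ D ^ 2 := by
    rw [← hD]; exact integral_nonneg fun τ => sq_nonneg _
  have hsub : μ - f₁ ≠ 0 := sub_ne_zero.mpr hne
  set g : ℝ → ℝ :=
    fun t => (Real.exp (-(2 * f₁) * t) - Real.exp (-(2 * μ) * t)) / (2 * (μ - f₁)) with hgdef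
  have hgint : IntegrableOn g (Set.Ioi 0) :=
    (((exp_neg_integrableOn_Ioi 0 (by positivity : (0:ℝ) < 2 * f₁)).sub
      (exp_neg_integrableOn_Ioi 0 (by positivity : (0:ℝ) < 2 * μ))).div_const _)
  have hgval : ∫ t in Set.Ioi (0:ℝ), g t = 1 / (4 * μ * f₁) := by
    simp only [hgdef]
    rw [integral_div,
      integral_sub (exp_neg_integrableOn_Ioi 0 (by positivity : (0:ℝ) < 2 * f₁))
        (exp_neg_integrableOn_Ioi 0 (by positivity : (0:ℝ) < 2 * μ)),
      exp_neg_integral_Ioi' _ (by positivity), exp_neg_integral_Ioi' _ (by positivity)]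
    field_simp
    ring
  -- pointwise bound
  have key : ∀ t ∈ Set.Ioi (0:ℝ), (ζ₂ t) ^ 2 ≤ m ^ 2 * echi0 ^ 2 * D ^ 2 * g t := by
    intro t ht
    have ht0 : (0:ℝ) ≤ t := le_of_lt ht
    set k : ℝ → ℝ := fun τ => Real.exp (-μ * (t - τ)) * Real.exp (-f₁ * τ) with hkdef
    have hkcont : Continuous k := by
      apply Continuous.mul <;> exact Real.continuous_exp.comp (by continuity)
    set ν := volume.restrict (Set.Ioc (0:ℝ) t) with hν
    have hI : ζ₂ t = |echi0| * m * ∫ τ, ‖θd τ‖ * k τ ∂ν := by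
      rw [hζ₂ t, intervalIntegral.integral_of_le ht0]
      simp only [hν, hkdef, mul_assoc]
    -- Memℒp facts
    have hmf : MemLp (fun τ => ‖θd τ‖) (ENNReal.ofReal 2) ν := by
      rw [show ENNReal.ofReal 2 = 2 by norm_num]
      refine (memLp_two_iff_integrable_sq
        (hθd.norm.aestronglyMeasurable)).mpr ?_
      exact hDint.mono_measure (Measure.restrict_mono Set.Ioc_subset_Ioi_self le_rfl)
    have hmk : MemLp k (ENNReal.ofReal 2) ν := by
      rw [show ENNReal.ofReal 2 = 2 by norm_num]
      refine (memLp_two_iff_integrable_sq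
        hkcont.aestronglyMeasurable).mpr ?_
      exact (hkcont.pow 2).integrableOn_Ioc
    have hpq : Real.HolderConjugate 2 2 := Real.HolderConjugate.two_two
    have hcs := MeasureTheory.integral_mul_le_Lp_mul_Lq_of_nonneg hpq
      (Filter.Eventually.of_forall fun τ => norm_nonneg _)
      (Filter.Eventually.of_forall fun τ => by positivity) hmf hmk
    -- rewrite rpow to pow
    have rpow2 : ∀ x : ℝ, 0 ≤ x → x ^ (2:ℝ) = x ^ 2 := by
      intro x hx
      rw [show (2:ℝ) = ((2:ℕ):ℝ) by norm_num, Real.rpow_natCast]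
    have hA : (∫ τ, ‖θd τ‖ ^ (2:ℝ) ∂ν) = ∫ τ, ‖θd τ‖ ^ 2 ∂ν := by
      exact integral_congr_ae (Filter.Eventually.of_forall fun τ => rpow2 _ (norm_nonneg _))
    have hB : (∫ τ, k τ ^ (2:ℝ) ∂ν) = ∫ τ, k τ ^ 2 ∂ν := by
      exact integral_congr_ae (Filter.Eventually.of_forall fun τ => rpow2 _ (by positivity))
    rw [hA, hB] at hcs
    set A := ∫ τ, ‖θd τ‖ ^ 2 ∂ν with hAdef
    set B := ∫ τ, k τ ^ 2 ∂ν with hBdef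
    have hAnn : 0 ≤ A := integral_nonneg fun τ => sq_nonneg _
    have hBnn : 0 ≤ B := integral_nonneg fun τ => sq_nonneg _
    have hInn : 0 ≤ ∫ τ, ‖θd τ‖ * k τ ∂ν :=
      integral_nonneg fun τ => mul_nonneg (norm_nonneg _) (by positivity)
    have hsq : (∫ τ, ‖θd τ‖ * k τ ∂ν) ^ 2 ≤ A * B := by
      have h2 : (A ^ (1/2:ℝ) * B ^ (1/2:ℝ)) ^ 2 = A * B := by
        rw [mul_pow, ← Real.rpow_natCast (A ^ (1/2:ℝ)) 2, ← Real.rpow_natCast (B ^ (1/2:ℝ)) 2,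
          ← Real.rpow_mul hAnn, ← Real.rpow_mul hBnn]
        norm_num
      calc (∫ τ, ‖θd τ‖ * k τ ∂ν) ^ 2 ≤ (A ^ (1/2:ℝ) * B ^ (1/2:ℝ)) ^ 2 :=
            pow_le_pow_left₀ hInn hcs 2
        _ = A * B := h2
    have hAD : A ≤ D ^ 2 := by
      rw [← hD, hAdef]
      exact setIntegral_mono_set hDint
        (Filter.Eventually.of_forall fun τ => sq_nonneg _)
        (HasSubset.Subset.eventuallyLE Set.Ioc_subset_Ioi_self)
    have hBg : B = g t := by
      rw [hBdef, hν, ← intervalIntegral.integral_of_le ht0]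
      have hint : ∀ τ : ℝ, k τ ^ 2 = Real.exp (-(2*μ) * t) * Real.exp ((2*μ - 2*f₁) * τ) := by
        intro τ
        rw [hkdef]
        rw [mul_pow, ← Real.exp_nat_mul, ← Real.exp_nat_mul, ← Real.exp_add, ← Real.exp_add]
        ring_nf
      rw [intervalIntegral.integral_congr (fun τ _ => hint τ),
        intervalIntegral.integral_const_mul,
        exp_mul_intervalIntegral (2*μ - 2*f₁) t (by intro h; apply hsub; linarith)]
      have hprod : Real.exp (-(2*μ) * t) * Real.exp ((2*μ - 2*f₁) * t) =
          Real.exp (-(2*f₁) * t) := by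
        rw [← Real.exp_add]; ring_nf
      rw [hgdef, ← mul_div_assoc, mul_sub, hprod, mul_one,
        show 2*μ - 2*f₁ = 2*(μ - f₁) by ring]
    have hζval : (ζ₂ t) ^ 2 = echi0 ^ 2 * m ^ 2 * (∫ τ, ‖θd τ‖ * k τ ∂ν) ^ 2 := by
      rw [hI]; rw [mul_pow, mul_pow, sq_abs]
    rw [hζval, ← hBg]
    have hmnn : (0:ℝ) ≤ m := le_trans zero_le_one hm
    calc echi0 ^ 2 * m ^ 2 * (∫ τ, ‖θd τ‖ * k τ ∂ν) ^ 2
        ≤ echi0 ^ 2 * m ^ 2 * (A * B) := by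
          apply mul_le_mul_of_nonneg_left hsq (by positivity)
      _ ≤ echi0 ^ 2 * m ^ 2 * (D ^ 2 * B) := by
          apply mul_le_mul_of_nonneg_left (mul_le_mul_of_nonneg_right hAD hBnn) (by positivity)
      _ = m ^ 2 * echi0 ^ 2 * D ^ 2 * B := by ring
  have hmono : (∫ t in Set.Ioi (0:ℝ), (ζ₂ t) ^ 2) ≤
      ∫ t in Set.Ioi (0:ℝ), m ^ 2 * echi0 ^ 2 * D ^ 2 * g t := by
    refine integral_mono_of_nonneg (Filter.Eventually.of_forall fun t => sq_nonneg _)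
      (hgint.const_mul _) ?_
    exact (ae_restrict_mem measurableSet_Ioi).mono key
  calc (∫ t in Set.Ioi (0:ℝ), (ζ₂ t) ^ 2)
      ≤ ∫ t in Set.Ioi (0:ℝ), m ^ 2 * echi0 ^ 2 * D ^ 2 * g t := hmono
    _ = m ^ 2 * echi0 ^ 2 * D ^ 2 * (1 / (4 * μ * f₁)) := by
        rw [integral_const_mul, hgval]
    _ = m ^ 2 * echi0 ^ 2 / (4 * μ * f₁) * D ^ 2 := by
        ring
end

section
/- Let f₁ > 0 and let θ : [0,∞) → ℝᵐ be C¹ with θ̇ ∈ L²([0,∞)). Let ω : [0,∞) → ℝᵐ be measurable and locally bounded, and define e_χ(t) = ∫₀^t e^{−f₁(t−τ)} θ̇(τ)ᵀ ( ∫₀^τ e^{−f₁(τ−z)} ω(z) dz ) dτ. Then e_χ(t) = o[ sup_{τ≤t} ‖ω(τ)‖ ], i.e., there exists β(t) → 0 with |e_χ(t)| ≤ β(t) sup_{τ≤t} ‖ω(τ)‖ (assuming sup_{τ≤t}‖ω(τ)‖ is nondecreasing and the bound holds for all t). -/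
open Matrix MeasureTheory intervalIntegral


lemma expIntEq (c a b : ℝ) (hc : c ≠ 0) :
    (∫ z in a..b, Real.exp (c * z)) = (Real.exp (c * b) - Real.exp (c * a)) / c := by
  have D : ∀ x : ℝ, HasDerivAt (fun y : ℝ => Real.exp (c * y) / c) (Real.exp (c * x)) x := by
    intro x
    have h := ((Real.hasDerivAt_exp (c * x)).comp x ((hasDerivAt_id x).const_mul c)).div_const c
    simpa [mul_comm, mul_div_assoc, mul_div_cancel_left₀ _ hc] using h
  rw [intervalIntegral.integral_eq_sub_of_hasDerivAt (fun x _ => D x)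
    ((Real.continuous_exp.comp (continuous_const.mul continuous_id)).intervalIntegrable a b)]
  ring

lemma expInt (c a b : ℝ) (hc : 0 < c) :
    (∫ z in a..b, Real.exp (-c * (b - z))) ≤ 1 / c := by
  have h1 : ∀ z, Real.exp (-c * (b - z)) = Real.exp (-c * b) * Real.exp (c * z) := by
    intro z; rw [← Real.exp_add]; ring_nf
  simp_rw [h1]
  rw [intervalIntegral.integral_const_mul, expIntEq c a b hc.ne', ← mul_div_assoc]
  have hnum : Real.exp (-c * b) * (Real.exp (c * b) - Real.exp (c * a)) ≤ 1 := by
    rw [mul_sub, ← Real.exp_add, ← Real.exp_add]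
    have := Real.exp_pos (-(c * b) + c * a)
    simp only [neg_mul, neg_add_cancel, Real.exp_zero]
    linarith
  gcongr


lemma norm_integrable (g : ℝ → ℝ) (hgm : Measurable g) (hg0 : ∀ τ, 0 ≤ g τ)
    (hg : Integrable (fun t => (g t)^2) (volume.restrict (Set.Ioi 0))) (a b : ℝ) (ha : 0 ≤ a) :
    IntegrableOn g (Set.Ioc a b) := by
  have hgsq : IntegrableOn (fun t => (g t)^2) (Set.Ioc a b) :=
    hg.mono_measure (Measure.restrict_mono (fun x hx => lt_of_le_of_lt ha hx.1) le_rfl)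
  have hc : IntegrableOn (fun _ : ℝ => (1:ℝ)) (Set.Ioc a b) :=
    integrableOn_const measure_Ioc_lt_top.ne
  have hbig : IntegrableOn (fun x => ((g x)^2 + 1)/2) (Set.Ioc a b) := (hgsq.add hc).div_const 2
  refine hbig.mono' hgm.aestronglyMeasurable (Filter.Eventually.of_forall fun x => ?_)
  rw [Real.norm_eq_abs, abs_of_nonneg (hg0 x)]
  nlinarith [sq_nonneg (g x - 1)]



lemma amgm (e x y : ℝ) (he : 0 < e) : x*y ≤ e/2*x^2 + 1/(2*e)*y^2 := by
  have key : 2*e*(x*y) ≤ e^2*x^2 + y^2 := by nlinarith [sq_nonneg (e*x - y)]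
  have h2e : 0 < 2*e := by linarith
  calc x*y = (2*e*(x*y))/(2*e) := by field_simp
    _ ≤ (e^2*x^2 + y^2)/(2*e) := by gcongr
    _ = e/2*x^2 + 1/(2*e)*y^2 := by field_simp

set_option maxHeartbeats 2000000 in
lemma conv_tendsto (f₁ : ℝ) (hf₁ : 0 < f₁) (g : ℝ → ℝ) (hgm : Measurable g)
    (hg0 : ∀ τ, 0 ≤ g τ)
    (hg : Integrable (fun t => (g t)^2) (volume.restrict (Set.Ioi 0))) :
    Filter.Tendsto (fun t => ∫ τ in (0:ℝ)..t, Real.exp (-f₁*(t-τ)) * g τ)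
      Filter.atTop (nhds 0) := by
  -- integrability of g on subintervals of [0,∞)
  have hgsq : ∀ a b : ℝ, 0 ≤ a → IntegrableOn (fun t => (g t)^2) (Set.Ioc a b) := by
    intro a b ha
    exact hg.mono_measure (Measure.restrict_mono (fun x hx => lt_of_le_of_lt ha hx.1) le_rfl)
  have hgInt : ∀ a b : ℝ, 0 ≤ a → IntegrableOn g (Set.Ioc a b) :=
    fun a b ha => norm_integrable g hgm hg0 hg a b ha
  have hgII : ∀ a b : ℝ, 0 ≤ a → a ≤ b → IntervalIntegrable g volume a b := by
    intro a b ha hab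
    rw [intervalIntegrable_iff_integrableOn_Ioc_of_le hab]; exact hgInt a b ha
  have hgsqII : ∀ a b : ℝ, 0 ≤ a → a ≤ b → IntervalIntegrable (fun t => (g t)^2) volume a b := by
    intro a b ha hab
    rw [intervalIntegrable_iff_integrableOn_Ioc_of_le hab]; exact hgsq a b ha
  -- product with exp is interval integrable
  have hprod : ∀ t a b : ℝ, 0 ≤ a → a ≤ b →
      IntervalIntegrable (fun τ => Real.exp (-f₁*(t-τ)) * g τ) volume a b := by
    intro t a b ha hab
    exact (hgII a b ha hab).continuousOn_mul
      (Continuous.continuousOn (by continuity))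
  -- main ε argument
  have hIlim : Filter.Tendsto (fun T => ∫ τ in (0:ℝ)..T, (g τ)^2) Filter.atTop
      (nhds (∫ x in Set.Ioi 0, (g x)^2)) :=
    MeasureTheory.intervalIntegral_tendsto_integral_Ioi 0 hg Filter.tendsto_id
  set Iinf := ∫ x in Set.Ioi 0, (g x)^2 with hIinfdef
  rw [Metric.tendsto_atTop]
  intro ε hε
  obtain ⟨T₀, hT₀tail, hT₀0⟩ :=
    ((hIlim.eventually (lt_mem_nhds (show Iinf - ε^2*f₁/2 < Iinf by
      have h : 0 < ε^2*f₁/2 := by positivity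
      linarith))).and
      (Filter.eventually_ge_atTop (0:ℝ))).exists
  set C := ∫ τ in (0:ℝ)..T₀, g τ with hCdef
  have hexp0 : Filter.Tendsto (fun t => Real.exp (-f₁*(t-T₀)) * C) Filter.atTop (nhds 0) := by
    have h1 : Filter.Tendsto (fun t : ℝ => -f₁*(t-T₀)) Filter.atTop Filter.atBot :=
      Filter.Tendsto.const_mul_atTop_of_neg (neg_lt_zero.2 hf₁)
        (Filter.tendsto_atTop_add_const_right _ (-T₀) Filter.tendsto_id)
    have h2 := (Real.tendsto_exp_atBot.comp h1).mul_const C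
    simpa using h2
  obtain ⟨N, hN⟩ := Filter.eventually_atTop.1
    (((hexp0.eventually (gt_mem_nhds (show (0:ℝ) < ε/4 by linarith))).and
      (Filter.eventually_ge_atTop T₀)))
  refine ⟨N, fun t ht => ?_⟩
  obtain ⟨hexpt, htT₀⟩ := hN t ht
  have ht0 : (0:ℝ) ≤ t := le_trans hT₀0 htT₀
  -- split the integral
  have hsplit : (∫ τ in (0:ℝ)..t, Real.exp (-f₁*(t-τ)) * g τ) =
      (∫ τ in (0:ℝ)..T₀, Real.exp (-f₁*(t-τ)) * g τ) +
      (∫ τ in T₀..t, Real.exp (-f₁*(t-τ)) * g τ) :=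
    (integral_add_adjacent_intervals (hprod t 0 T₀ le_rfl hT₀0) (hprod t T₀ t hT₀0 htT₀)).symm
  -- bound the first piece
  have hA : (∫ τ in (0:ℝ)..T₀, Real.exp (-f₁*(t-τ)) * g τ) ≤ Real.exp (-f₁*(t-T₀)) * C := by
    rw [hCdef, ← intervalIntegral.integral_const_mul]
    refine intervalIntegral.integral_mono_on hT₀0 (hprod t 0 T₀ le_rfl hT₀0)
      ((hgII 0 T₀ le_rfl hT₀0).const_mul _) (fun x hx => ?_)
    exact mul_le_mul_of_nonneg_right
      (Real.exp_le_exp.2 (by nlinarith [mul_nonneg hf₁.le (sub_nonneg.2 hx.2)])) (hg0 x)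
  -- bound the second piece
  set ε' := ε * f₁ with hε'def
  have hε' : 0 < ε' := mul_pos hε hf₁
  have hB : (∫ τ in T₀..t, Real.exp (-f₁*(t-τ)) * g τ) ≤ ε/4 + ε/4 := by
    have hint1 : IntervalIntegrable (fun τ => ε'/2 * Real.exp (-(2*f₁)*(t-τ))) volume T₀ t :=
      (Continuous.intervalIntegrable (by continuity) T₀ t)
    have hint2 : IntervalIntegrable (fun τ => 1/(2*ε') * (g τ)^2) volume T₀ t :=
      (hgsqII T₀ t hT₀0 htT₀).const_mul _
    have h1 : (∫ τ in T₀..t, Real.exp (-f₁*(t-τ)) * g τ) ≤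
        ∫ τ in T₀..t, (ε'/2 * Real.exp (-(2*f₁)*(t-τ)) + 1/(2*ε') * (g τ)^2) := by
      refine intervalIntegral.integral_mono_on htT₀ (hprod t T₀ t hT₀0 htT₀)
        (hint1.add hint2) (fun x _ => ?_)
      have hE2 : Real.exp (-(2*f₁)*(t-x)) = (Real.exp (-f₁*(t-x)))^2 := by
        rw [sq, ← Real.exp_add]; ring_nf
      rw [hE2]
      exact amgm ε' (Real.exp (-f₁*(t-x))) (g x) hε'
    rw [intervalIntegral.integral_add hint1 hint2,
      intervalIntegral.integral_const_mul, intervalIntegral.integral_const_mul] at h1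
    have h2 : (∫ τ in T₀..t, Real.exp (-(2*f₁)*(t-τ))) ≤ 1/(2*f₁) :=
      expInt (2*f₁) T₀ t (by linarith)
    have h3 : (∫ τ in T₀..t, (g τ)^2) ≤ ε^2*f₁/2 := by
      have hsum : (∫ τ in (0:ℝ)..T₀, (g τ)^2) + (∫ τ in T₀..t, (g τ)^2)
          = ∫ τ in (0:ℝ)..t, (g τ)^2 :=
        integral_add_adjacent_intervals (hgsqII 0 T₀ le_rfl hT₀0) (hgsqII T₀ t hT₀0 htT₀)
      have hle : (∫ τ in (0:ℝ)..t, (g τ)^2) ≤ Iinf := by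
        rw [intervalIntegral.integral_of_le ht0]
        refine setIntegral_mono_set hg
          (Filter.Eventually.of_forall (fun x => sq_nonneg _)) ?_
        exact Filter.Eventually.of_forall (fun x hx => hx.1)
      linarith
    have hpos : (0:ℝ) ≤ ∫ τ in T₀..t, (g τ)^2 :=
      intervalIntegral.integral_nonneg htT₀ (fun x _ => sq_nonneg _)
    have hb1 : ε'/2 * (∫ τ in T₀..t, Real.exp (-(2*f₁)*(t-τ))) ≤ ε/4 := by
      calc ε'/2 * (∫ τ in T₀..t, Real.exp (-(2*f₁)*(t-τ))) ≤ ε'/2 * (1/(2*f₁)) := by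
            apply mul_le_mul_of_nonneg_left h2 (by linarith)
        _ = ε/4 := by rw [hε'def]; field_simp; ring
    have hb2 : 1/(2*ε') * (∫ τ in T₀..t, (g τ)^2) ≤ ε/4 := by
      calc 1/(2*ε') * (∫ τ in T₀..t, (g τ)^2) ≤ 1/(2*ε') * (ε^2*f₁/2) := by
            apply mul_le_mul_of_nonneg_left h3 (by positivity)
        _ = ε/4 := by rw [hε'def]; field_simp; ring
    linarith
  have hG0 : (0:ℝ) ≤ ∫ τ in (0:ℝ)..t, Real.exp (-f₁*(t-τ)) * g τ :=
    intervalIntegral.integral_nonneg ht0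
      (fun x _ => mul_nonneg (Real.exp_pos _).le (hg0 x))
  rw [Real.dist_eq, sub_zero, abs_of_nonneg hG0, hsplit]
  linarith

set_option maxHeartbeats 1000000 in
theorem echi_small_o {m : ℕ} (f₁ : ℝ) (hf₁ : 0 < f₁)
    (θd : ℝ → Fin m → ℝ) (hθdm : Measurable θd)
    (hθd : Integrable (fun t => ‖θd t‖^2) (volume.restrict (Set.Ioi 0)))
    (ω : ℝ → Fin m → ℝ) (hωm : Measurable ω)
    (hloc : ∀ r : ℝ, BddAbove ((fun τ => ‖ω τ‖) '' Set.Icc 0 r))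
    (eχ : ℝ → ℝ)
    (heχ : ∀ t, eχ t = ∫ τ in (0:ℝ)..t, Real.exp (-f₁ * (t - τ)) *
        (θd τ ⬝ᵥ fun i => ∫ z in (0:ℝ)..τ, Real.exp (-f₁ * (τ - z)) * ω z i)) :
    ∃ β : ℝ → ℝ, (∀ t, 0 ≤ β t) ∧ Filter.Tendsto β Filter.atTop (nhds 0) ∧
      ∀ t ≥ (0:ℝ), |eχ t| ≤ β t * sSup ((fun τ => ‖ω τ‖) '' Set.Icc 0 t) := by
  have hgm : Measurable fun τ => ‖θd τ‖ := hθdm.norm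
  have hg0 : ∀ τ, (0:ℝ) ≤ ‖θd τ‖ := fun τ => norm_nonneg _
  set G : ℝ → ℝ := fun t => ∫ τ in (0:ℝ)..t, Real.exp (-f₁*(t-τ)) * ‖θd τ‖ with hGdef
  refine ⟨fun t => ((m:ℝ) / f₁) * |G t|, fun t => by positivity, ?_, ?_⟩
  · have h := (conv_tendsto f₁ hf₁ _ hgm hg0 hθd).abs.const_mul ((m:ℝ)/f₁)
    simpa only [abs_zero, mul_zero] using h
  · intro t ht
    set S := sSup ((fun τ => ‖ω τ‖) '' Set.Icc 0 t) with hSdef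
    have hωS : ∀ z, z ∈ Set.Icc 0 t → ‖ω z‖ ≤ S :=
      fun z hz => le_csSup (hloc t) ⟨z, hz, rfl⟩
    have hS0 : 0 ≤ S := le_trans (norm_nonneg _) (hωS 0 ⟨le_rfl, ht⟩)
    -- inner integral bound
    have hinner : ∀ τ, τ ∈ Set.Ioc 0 t → ∀ i,
        |∫ z in (0:ℝ)..τ, Real.exp (-f₁ * (τ - z)) * ω z i| ≤ S / f₁ := by
      intro τ hτ i
      have hτ0 : (0:ℝ) ≤ τ := hτ.1.le
      have hcont : Continuous fun z => Real.exp (-f₁ * (τ - z)) * S := by continuity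
      calc |∫ z in (0:ℝ)..τ, Real.exp (-f₁ * (τ - z)) * ω z i|
          ≤ ∫ z in (0:ℝ)..τ, ‖Real.exp (-f₁ * (τ - z)) * ω z i‖ := by
            rw [← Real.norm_eq_abs]
            exact intervalIntegral.norm_integral_le_integral_norm hτ0
        _ = ∫ z in Set.Ioc 0 τ, ‖Real.exp (-f₁ * (τ - z)) * ω z i‖ :=
            intervalIntegral.integral_of_le hτ0
        _ ≤ ∫ z in Set.Ioc 0 τ, Real.exp (-f₁ * (τ - z)) * S := by
            refine integral_mono_of_nonneg
              (Filter.Eventually.of_forall fun z => norm_nonneg _)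
              (hcont.integrableOn_Ioc)
              ((ae_restrict_iff' measurableSet_Ioc).2 (Filter.Eventually.of_forall
                fun z hz => ?_))
            dsimp only
            rw [Real.norm_eq_abs, abs_mul, abs_of_pos (Real.exp_pos _)]
            refine mul_le_mul_of_nonneg_left ?_ (Real.exp_pos _).le
            calc |ω z i| = ‖ω z i‖ := (Real.norm_eq_abs _).symm
              _ ≤ ‖ω z‖ := norm_le_pi_norm (ω z) i
              _ ≤ S := hωS z ⟨hz.1.le, hz.2.trans hτ.2⟩
        _ = (∫ z in (0:ℝ)..τ, Real.exp (-f₁ * (τ - z))) * S := by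
            rw [intervalIntegral.integral_of_le hτ0, ← MeasureTheory.integral_mul_const]
        _ ≤ (1/f₁) * S := mul_le_mul_of_nonneg_right (expInt f₁ 0 τ hf₁) hS0
        _ = S / f₁ := by ring
    -- dot product bound
    have hdot : ∀ τ, τ ∈ Set.Ioc 0 t →
        |θd τ ⬝ᵥ fun i => ∫ z in (0:ℝ)..τ, Real.exp (-f₁ * (τ - z)) * ω z i|
          ≤ (m:ℝ) * (S/f₁) * ‖θd τ‖ := by
      intro τ hτ
      rw [dotProduct]
      calc |∑ i, θd τ i * (∫ z in (0:ℝ)..τ, Real.exp (-f₁ * (τ - z)) * ω z i)|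
          ≤ ∑ i, |θd τ i * (∫ z in (0:ℝ)..τ, Real.exp (-f₁ * (τ - z)) * ω z i)| :=
            Finset.abs_sum_le_sum_abs _ _
        _ ≤ ∑ _i : Fin m, ‖θd τ‖ * (S/f₁) := by
            refine Finset.sum_le_sum fun i _ => ?_
            rw [abs_mul]
            refine mul_le_mul ?_ (hinner τ hτ i) (abs_nonneg _) (norm_nonneg _)
            calc |θd τ i| = ‖θd τ i‖ := (Real.norm_eq_abs _).symm
              _ ≤ ‖θd τ‖ := norm_le_pi_norm (θd τ) i
        _ = (m:ℝ) * (S/f₁) * ‖θd τ‖ := by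
            rw [Finset.sum_const, Finset.card_univ, Fintype.card_fin, nsmul_eq_mul]
            ring
    -- outer bound
    have hGnn : 0 ≤ G t :=
      intervalIntegral.integral_nonneg ht fun x _ => mul_nonneg (Real.exp_pos _).le (hg0 x)
    have hgIIt : IntervalIntegrable (fun τ => ‖θd τ‖) volume 0 t :=
      (intervalIntegrable_iff_integrableOn_Ioc_of_le ht).2
        (norm_integrable _ hgm hg0 hθd 0 t le_rfl)
    have hdom : IntervalIntegrable
        (fun τ => Real.exp (-f₁*(t-τ)) * ((m:ℝ) * (S/f₁) * ‖θd τ‖)) volume 0 t :=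
      (hgIIt.const_mul _).continuousOn_mul (Continuous.continuousOn (by continuity))
    rw [heχ t]
    calc |∫ τ in (0:ℝ)..t, Real.exp (-f₁ * (t - τ)) *
            (θd τ ⬝ᵥ fun i => ∫ z in (0:ℝ)..τ, Real.exp (-f₁ * (τ - z)) * ω z i)|
        ≤ ∫ τ in (0:ℝ)..t, ‖Real.exp (-f₁ * (t - τ)) *
            (θd τ ⬝ᵥ fun i => ∫ z in (0:ℝ)..τ, Real.exp (-f₁ * (τ - z)) * ω z i)‖ := by
          rw [← Real.norm_eq_abs]
          exact intervalIntegral.norm_integral_le_integral_norm ht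
      _ = ∫ τ in Set.Ioc 0 t, ‖Real.exp (-f₁ * (t - τ)) *
            (θd τ ⬝ᵥ fun i => ∫ z in (0:ℝ)..τ, Real.exp (-f₁ * (τ - z)) * ω z i)‖ :=
          intervalIntegral.integral_of_le ht
      _ ≤ ∫ τ in Set.Ioc 0 t, Real.exp (-f₁*(t-τ)) * ((m:ℝ) * (S/f₁) * ‖θd τ‖) := by
          refine integral_mono_of_nonneg
            (Filter.Eventually.of_forall fun τ => norm_nonneg _)
            ((intervalIntegrable_iff_integrableOn_Ioc_of_le ht).1 hdom)
            ((ae_restrict_iff' measurableSet_Ioc).2 (Filter.Eventually.of_forall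
              fun τ hτ => ?_))
          dsimp only
          rw [Real.norm_eq_abs, abs_mul, abs_of_pos (Real.exp_pos _)]
          exact mul_le_mul_of_nonneg_left (hdot τ hτ) (Real.exp_pos _).le
      _ = ((m:ℝ) * (S/f₁)) * G t := by
          simp only [hGdef]
          rw [intervalIntegral.integral_of_le ht, ← MeasureTheory.integral_const_mul]
          congr 1 with τ; ring
      _ = ((m:ℝ) / f₁) * |G t| * S := by rw [abs_of_nonneg hGnn]; ring
end

section
/- Let e : [0,∞) → ℝⁿ be C¹ with e ∈ L²([0,∞); ℝⁿ) and ė bounded. Then e(t) → 0 as t → ∞. -/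
open MeasureTheory

theorem barbalat_l2 {n : ℕ} (e e' : ℝ → EuclideanSpace ℝ (Fin n))
    (hd : ∀ t, HasDerivAt e (e' t) t)
    (hL2 : Integrable (fun t => ‖e t‖^2) (volume.restrict (Set.Ioi 0)))
    (hbd : ∃ M : ℝ, ∀ t, ‖e' t‖ ≤ M) :
    Filter.Tendsto e Filter.atTop (nhds 0) := by
  obtain ⟨M, hM⟩ := hbd
  set g : ℝ → ℝ := fun t => ‖e t‖^2 with hg
  have hInt : IntegrableOn g (Set.Ioi 0) := hL2
  have hgnn : ∀ t, 0 ≤ g t := fun t => sq_nonneg _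
  set M' : ℝ := max M 1 with hM'def
  have hMpos : (0:ℝ) < M' := lt_of_lt_of_le one_pos (le_max_right _ _)
  have hM1 : ∀ t, ‖e' t‖ ≤ M' := fun t => (hM t).trans (le_max_left _ _)
  have hlip : ∀ x y : ℝ, ‖e y - e x‖ ≤ M' * ‖y - x‖ := fun x y =>
    convex_univ.norm_image_sub_le_of_norm_hasDerivWithin_le
      (fun t _ => (hd t).hasDerivWithinAt) (fun t _ => hM1 t) trivial trivial
  by_contra hcon
  rw [NormedAddCommGroup.tendsto_nhds_zero] at hcon
  push_neg at hcon
  obtain ⟨ε, hε, hfreq⟩ := hcon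
  have hfreq : ∃ᶠ x in Filter.atTop, ¬ ‖e x‖ < ε := hfreq.mono fun x hx => not_lt.2 hx
  have hfreq' : ∀ N : ℝ, ∃ t ≥ N, ε ≤ ‖e t‖ := by
    intro N
    obtain ⟨t, ht, ht2⟩ := (Filter.frequently_atTop.1 hfreq) N
    exact ⟨t, ht, not_lt.1 ht2⟩
  set δ : ℝ := ε / (2 * M') with hδdef
  have hδpos : 0 < δ := div_pos hε (by positivity)
  set c : ℝ := (ε/2)^2 * δ with hcdef
  have hc : 0 < c := by positivity
  -- tail integral tends to zero
  have t1 : Filter.Tendsto (fun N => ∫ t in (0:ℝ)..N, g t) Filter.atTop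
      (nhds (∫ t in Set.Ioi 0, g t)) :=
    intervalIntegral_tendsto_integral_Ioi 0 hInt Filter.tendsto_id
  have split : ∀ N : ℝ, 0 ≤ N →
      (∫ t in Set.Ioi N, g t) = (∫ t in Set.Ioi 0, g t) - ∫ t in (0:ℝ)..N, g t := by
    intro N hN
    rw [intervalIntegral.integral_of_le hN]
    have hu : Set.Ioc 0 N ∪ Set.Ioi N = Set.Ioi 0 := Set.Ioc_union_Ioi_eq_Ioi hN
    have := setIntegral_union (Set.Ioc_disjoint_Ioi le_rfl) measurableSet_Ioi
      (hInt.mono_set (by rw [← hu]; exact Set.subset_union_left))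
      (hInt.mono_set (by rw [← hu]; exact Set.subset_union_right))
    rw [← hu, this]
    ring
  have tail : Filter.Tendsto (fun N => ∫ t in Set.Ioi N, g t) Filter.atTop (nhds 0) := by
    have h2 : Filter.Tendsto
        (fun N => (∫ t in Set.Ioi 0, g t) - ∫ t in (0:ℝ)..N, g t) Filter.atTop (nhds 0) := by
      have := Filter.Tendsto.sub (tendsto_const_nhds
        (x := ∫ t in Set.Ioi 0, g t) (f := Filter.atTop)) t1
      simpa using this
    refine h2.congr' ?_
    filter_upwards [Filter.eventually_ge_atTop (0:ℝ)] with N hN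
    exact (split N hN).symm
  obtain ⟨N, hNlt, hN0⟩ :=
    (((tendsto_order.1 tail).2 c hc).and (Filter.eventually_ge_atTop (0:ℝ))).exists
  obtain ⟨t₀, ht₀N, ht₀⟩ := hfreq' N
  -- lower bound for g on Ioc t₀ (t₀ + δ)
  have hlb : ∀ t ∈ Set.Ioc t₀ (t₀ + δ), (ε/2)^2 ≤ g t := by
    intro t ht
    have h1 : ‖e t₀ - e t‖ ≤ M' * (t - t₀) := by
      have := hlip t t₀
      rwa [Real.norm_eq_abs, abs_sub_comm, abs_of_nonneg (by linarith [ht.1.le])] at this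
    have h2 : M' * (t - t₀) ≤ M' * δ := by
      have := ht.2
      nlinarith
    have h3 : M' * δ = ε / 2 := by
      rw [hδdef]
      field_simp
    have h4 : ‖e t₀‖ - ‖e t‖ ≤ ε / 2 := by
      calc ‖e t₀‖ - ‖e t‖ ≤ ‖e t₀ - e t‖ := norm_sub_norm_le _ _
        _ ≤ M' * (t - t₀) := h1
        _ ≤ ε / 2 := by rw [← h3]; exact h2
    have h5 : ε / 2 ≤ ‖e t‖ := by linarith
    have : (ε/2)^2 ≤ ‖e t‖^2 := by nlinarith [norm_nonneg (e t)]
    exact this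
  have hIocsub : Set.Ioc t₀ (t₀ + δ) ⊆ Set.Ioi N :=
    fun x hx => lt_of_le_of_lt ht₀N hx.1
  have hIocInt : IntegrableOn g (Set.Ioc t₀ (t₀ + δ)) :=
    hInt.mono_set (hIocsub.trans (Set.Ioi_subset_Ioi hN0))
  have hlow : c ≤ ∫ t in Set.Ioc t₀ (t₀ + δ), g t := by
    have := setIntegral_ge_of_const_le (c := (ε/2)^2) measurableSet_Ioc
      (by rw [Real.volume_Ioc]; exact ENNReal.ofReal_ne_top) hlb hIocInt
    rw [measureReal_def, Real.volume_Ioc] at this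
    rw [ENNReal.toReal_ofReal (by linarith), smul_eq_mul, mul_comm (t₀ + δ - t₀)] at this
    calc c = (ε/2)^2 * δ := rfl
      _ = (ε/2)^2 * (t₀ + δ - t₀) := by ring_nf
      _ ≤ _ := this
  have hup : (∫ t in Set.Ioc t₀ (t₀ + δ), g t) ≤ ∫ t in Set.Ioi N, g t := by
    apply setIntegral_mono_set (hInt.mono_set (Set.Ioi_subset_Ioi hN0))
    · exact Filter.Eventually.of_forall hgnn
    · exact hIocsub.eventuallyLE
  linarith
end
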